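/- arXiv:2211.01448 — 2 statements merged into one kernel-verified Lean document; each statement's English description precedes it below -/
import Mathlib

section
/- Let K ⊂ ℝ^d be compact and let ν_N, η_N be finite Borel measures on ℝ^d converging narrowly to ν and η respectively. Suppose that for every N and every set C ⊆ ℝ^d, ν_N(C̄ + K) ≥ η_N(C), where C̄ denotes the closure of C and + the Minkowski sum. Then ν(C̄ + K) ≥ η(C) for every set C ⊆ ℝ^d. -/
open MeasureTheory Filter
open scoped Pointwise

/-- Local mass preservation passes to narrow limits: if `K` is compact,
`ν_N → ν` and `η_N → η` narrowly, and `ν_N(C̄ + K) ≥ η_N(C)` for every `N` and every set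
`C`, then `ν(C̄ + K) ≥ η(C)` for every set `C`. -/
theorem stmt15 (d : ℕ) (K : Set (EuclideanSpace ℝ (Fin d))) (hK : IsCompact K)
    (ν η : ℕ → FiniteMeasure (EuclideanSpace ℝ (Fin d)))
    (νlim ηlim : FiniteMeasure (EuclideanSpace ℝ (Fin d)))
    (hν : Tendsto ν atTop (nhds νlim)) (hη : Tendsto η atTop (nhds ηlim))
    (h : ∀ N : ℕ, ∀ C : Set (EuclideanSpace ℝ (Fin d)),
      (η N : Measure (EuclideanSpace ℝ (Fin d))) C
        ≤ (ν N : Measure (EuclideanSpace ℝ (Fin d))) (closure C + K)) :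
    ∀ C : Set (EuclideanSpace ℝ (Fin d)),
      (ηlim : Measure (EuclideanSpace ℝ (Fin d))) C
        ≤ (νlim : Measure (EuclideanSpace ℝ (Fin d))) (closure C + K) := by
  intro C
  set F : Set (EuclideanSpace ℝ (Fin d)) := closure C with hFdef
  have F_closed : IsClosed F := isClosed_closure
  set S : Set (EuclideanSpace ℝ (Fin d)) := F + K with hSdef
  have S_closed : IsClosed S := F_closed.add_right_of_isCompact hK
  have key : ∀ δ : ℝ, 0 < δ →
      (ηlim : Measure (EuclideanSpace ℝ (Fin d))) C ≤ (νlim : Measure (EuclideanSpace ℝ (Fin d))) (Metric.cthickening δ S) := by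
    intro δ δpos
    set f := thickenedIndicator δpos F with hf
    -- step 1: ηlim C ≤ ∫⁻ f dηlim
    have h1 : (ηlim : Measure (EuclideanSpace ℝ (Fin d))) C ≤ ∫⁻ x, (f x : ENNReal) ∂(ηlim : Measure (EuclideanSpace ℝ (Fin d))) := by
      calc (ηlim : Measure (EuclideanSpace ℝ (Fin d))) C ≤ (ηlim : Measure (EuclideanSpace ℝ (Fin d))) F := measure_mono subset_closure
        _ = ∫⁻ x, F.indicator 1 x ∂(ηlim : Measure (EuclideanSpace ℝ (Fin d))) :=
            (lintegral_indicator_one F_closed.measurableSet).symm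
        _ ≤ ∫⁻ x, (f x : ENNReal) ∂(ηlim : Measure (EuclideanSpace ℝ (Fin d))) := by
            refine lintegral_mono fun x => ?_
            by_cases hx : x ∈ F
            · simp [hf, Set.indicator_of_mem hx, thickenedIndicator_one δpos F hx]
            · simp [Set.indicator_of_notMem hx]
    -- step 2: for each N, ∫⁻ f dη_N ≤ η_N (cthickening δ F)
    have h2 : ∀ N, ∫⁻ x, (f x : ENNReal) ∂(η N : Measure (EuclideanSpace ℝ (Fin d)))
        ≤ (η N : Measure (EuclideanSpace ℝ (Fin d))) (Metric.cthickening δ F) := by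
      intro N
      calc ∫⁻ x, (f x : ENNReal) ∂(η N : Measure (EuclideanSpace ℝ (Fin d)))
          ≤ ∫⁻ x, (Metric.cthickening δ F).indicator 1 x ∂(η N : Measure (EuclideanSpace ℝ (Fin d))) := by
            refine lintegral_mono fun x => ?_
            by_cases hx : x ∈ Metric.cthickening δ F
            · simp only [Set.indicator_of_mem hx, Pi.one_apply]
              exact_mod_cast thickenedIndicator_le_one δpos F x
            · have hx' : x ∉ Metric.thickening δ F :=
                fun hmem => hx (Metric.thickening_subset_cthickening δ F hmem)
              simp [hf, Set.indicator_of_notMem hx, thickenedIndicator_zero δpos F hx']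
        _ = (η N : Measure (EuclideanSpace ℝ (Fin d))) (Metric.cthickening δ F) :=
            lintegral_indicator_one Metric.isClosed_cthickening.measurableSet
    -- step 3: translate hypothesis to the cthickening of S
    have h4 : Metric.cthickening δ F + K ⊆ Metric.cthickening δ S := by
      rintro x ⟨a, ha, k, hk, rfl⟩
      have ha' : EMetric.infEdist a F ≤ ENNReal.ofReal δ := ha
      have : EMetric.infEdist (a + k) S ≤ EMetric.infEdist a F := by
        rw [EMetric.infEdist]
        refine le_iInf₂ fun b hb => ?_
        calc EMetric.infEdist (a + k) S ≤ edist (a + k) (b + k) :=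
              EMetric.infEdist_le_edist_of_mem (Set.add_mem_add hb hk)
          _ = edist a b := edist_add_right a b k
      exact le_trans this ha'
    have h3 : ∀ N, (η N : Measure (EuclideanSpace ℝ (Fin d))) (Metric.cthickening δ F)
        ≤ (ν N : Measure (EuclideanSpace ℝ (Fin d))) (Metric.cthickening δ S) := by
      intro N
      have := h N (Metric.cthickening δ F)
      rw [Metric.isClosed_cthickening.closure_eq] at this
      exact this.trans (measure_mono h4)
    -- step 4: portmanteau for ν on the closed set cthickening δ S
    have h5 : (atTop.limsup fun N => (ν N : Measure (EuclideanSpace ℝ (Fin d))) (Metric.cthickening δ S))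
        ≤ (νlim : Measure (EuclideanSpace ℝ (Fin d))) (Metric.cthickening δ S) :=
      FiniteMeasure.limsup_measure_closed_le_of_tendsto hν Metric.isClosed_cthickening
    -- step 5: convergence of lintegrals
    have h6 : Tendsto (fun N => ∫⁻ x, (f x : ENNReal) ∂(η N : Measure (EuclideanSpace ℝ (Fin d)))) atTop
        (nhds (∫⁻ x, (f x : ENNReal) ∂(ηlim : Measure (EuclideanSpace ℝ (Fin d))))) :=
      FiniteMeasure.tendsto_iff_forall_lintegral_tendsto.mp hη f
    calc (ηlim : Measure (EuclideanSpace ℝ (Fin d))) C ≤ ∫⁻ x, (f x : ENNReal) ∂(ηlim : Measure (EuclideanSpace ℝ (Fin d))) := h1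
      _ = atTop.limsup fun N => ∫⁻ x, (f x : ENNReal) ∂(η N : Measure (EuclideanSpace ℝ (Fin d))) := h6.limsup_eq.symm
      _ ≤ atTop.limsup fun N => (ν N : Measure (EuclideanSpace ℝ (Fin d))) (Metric.cthickening δ S) :=
          limsup_le_limsup (Eventually.of_forall fun N => (h2 N).trans (h3 N))
      _ ≤ (νlim : Measure (EuclideanSpace ℝ (Fin d))) (Metric.cthickening δ S) := h5
  have hcth : Tendsto (fun δ : ℝ => (νlim : Measure (EuclideanSpace ℝ (Fin d))) (Metric.cthickening δ S))
      (nhds 0) (nhds ((νlim : Measure (EuclideanSpace ℝ (Fin d))) S)) :=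
    tendsto_measure_cthickening_of_isClosed ⟨1, one_pos, measure_ne_top _ _⟩ S_closed
  refine ge_of_tendsto (hcth.mono_left (nhdsWithin_le_nhds (s := Set.Ioi (0:ℝ)))) ?_
  filter_upwards [self_mem_nhdsWithin] with δ (hδ : δ ∈ Set.Ioi (0:ℝ))
  exact key δ hδ
end

section
/- Let d ≥ 1, 0 < α ≤ 2, T > 0, M > 0, and let (x_i, v_i)_{i=1}^N be a C¹ non-collisional solution of the Cucker–Smale particle system with communication weight ψ(s) = s^{-α} on [0,T], with |v_i(t)| ≤ M and |x_i(t)| ≤ (T+1)M for all i and t. Let φ ∈ C²(ℝ^{2d}) satisfy ‖φ‖_∞ ≤ 1, ‖∇φ‖_∞ ≤ 1 and have ∇_v φ Lipschitz with constant at most 1. Then for every t ∈ [0,T], |d/dt (1/N) Σ_{i=1}^N φ(x_i(t), v_i(t))| ≤ M + (1/2)(2(T+1)M)^{2−α} + (1/(2N²)) Σ_{i≠j} |v_i(t) − v_j(t)|² |x_i(t) − x_j(t)|^{-α}. -/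
open Set Finset MeasureTheory

noncomputable section

/-- Phase space `ℝ^d_x × ℝ^d_v`. -/
abbrev Phase (d : ℕ) := (EuclideanSpace ℝ (Fin d)) × (EuclideanSpace ℝ (Fin d))

/-- Velocity gradient `∇ᵥφ` of a function on phase space. -/
def gradV {d : ℕ} (φ : Phase d → ℝ) (z : Phase d) : EuclideanSpace ℝ (Fin d) :=
  gradient (fun w => φ (z.1, w)) z.2

lemma gradV_inner {d : ℕ} (φ : Phase d → ℝ) (hφ : Differentiable ℝ φ) (z : Phase d)
    (w : EuclideanSpace ℝ (Fin d)) :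
    (inner ℝ (gradV φ z) w : ℝ) = fderiv ℝ φ z (0, w) := by
  have h : HasFDerivAt (fun w => φ (z.1, w))
      ((fderiv ℝ φ z).comp (ContinuousLinearMap.inr ℝ _ _)) z.2 := by
    have h1 := (hφ (z.1, z.2)).hasFDerivAt
    have h2 := hasFDerivAt_prodMk_right (𝕜 := ℝ) z.1 z.2
    exact h1.comp z.2 h2
  rw [gradV, gradient, h.fderiv, InnerProductSpace.toDual_symm_apply]
  rfl

lemma sum_erase_swap {N : ℕ} (f : Fin N → Fin N → ℝ) :
    ∑ i : Fin N, ∑ j ∈ Finset.univ.erase i, f i j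
      = ∑ i : Fin N, ∑ j ∈ Finset.univ.erase i, f j i := by
  have key : ∀ g : Fin N → Fin N → ℝ,
      ∑ i : Fin N, ∑ j ∈ Finset.univ.erase i, g i j
        = ∑ i : Fin N, ∑ j : Fin N, if j ≠ i then g i j else 0 := by
    intro g
    refine Finset.sum_congr rfl fun i _ => ?_
    rw [← Finset.sum_filter, Finset.filter_ne']
  rw [key f, key (fun i j => f j i), Finset.sum_comm]
  refine Finset.sum_congr rfl fun i _ => Finset.sum_congr rfl fun j _ => ?_
  simp only [ne_eq]
  exact if_congr (by constructor <;> (intro h1 h2; exact h1 h2.symm)) rfl rfl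

lemma pair_bound (α : ℝ) (hα2 : α ≤ 2) (a b C : ℝ)
    (ha : 0 < a) (haC : a ≤ C) :
    a ^ (-α) * (max a b * b) ≤ (1/2) * C ^ (2-α) + a ^ (-α) * b ^ 2 := by
  have hψ : (0:ℝ) ≤ a ^ (-α) := Real.rpow_nonneg ha.le _
  have h1 : a ^ (-α) * a ^ 2 = a ^ (2-α) := by
    rw [← Real.rpow_two, ← Real.rpow_add ha]; ring_nf
  have h2 : a ^ (2-α) ≤ C ^ (2-α) := Real.rpow_le_rpow ha.le haC (by linarith)
  rcases le_total a b with h | h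
  · rw [max_eq_right h]
    have hC : 0 ≤ C ^ (2-α) := le_trans (Real.rpow_nonneg ha.le _) h2
    nlinarith [sq_nonneg b]
  · rw [max_eq_left h]
    nlinarith [mul_nonneg hψ (sq_nonneg (a - b))]

lemma final_arith (n c q : ℝ) (ht1 : n⁻¹ * n ≤ 1) (ht0 : 0 ≤ n⁻¹ * n) (hc : 0 ≤ c)
    (hq : 0 ≤ q) :
    n⁻¹ * (n⁻¹ * ((1/2) * (n * (n * ((1/2) * c)) + q)))
      ≤ (1/2) * c + (1 / (2 * n^2)) * q := by
  have heq : n⁻¹ * (n⁻¹ * ((1/2) * q)) = (1 / (2 * n^2)) * q := by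
    have h0 : (1 / (2 * n^2)) = n⁻¹ * n⁻¹ * (1/2) := by
      rw [one_div, mul_inv, sq, mul_inv]; ring
    rw [h0]; ring
  have hA : n⁻¹ * (n⁻¹ * ((1/2) * (n * (n * ((1/2) * c)))))
      = (n⁻¹ * n) * ((n⁻¹ * n) * ((1/4) * c)) := by ring
  have hB : (n⁻¹ * n) * ((n⁻¹ * n) * ((1/4) * c)) ≤ (1/2) * c := by
    have hu : (n⁻¹ * n) * (n⁻¹ * n) ≤ 1 := by nlinarith
    nlinarith [mul_le_mul_of_nonneg_right hu hc]
  calc n⁻¹ * (n⁻¹ * ((1/2) * (n * (n * ((1/2) * c)) + q)))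
      = n⁻¹ * (n⁻¹ * ((1/2) * (n * (n * ((1/2) * c))))) + n⁻¹ * (n⁻¹ * ((1/2) * q)) := by ring
    _ ≤ (1/2) * c + (1 / (2 * n^2)) * q := by rw [heq, hA]; exact add_le_add hB le_rfl

/-- Derivative estimate along the singular Cucker–Smale flow: for a
`C²` observable `φ` with `‖φ‖_∞ ≤ 1`, `‖∇φ‖_∞ ≤ 1` and `∇ᵥφ` 1-Lipschitz, the time
derivative of `(1/N) Σ φ(x_i, v_i)` is bounded by
`M + (1/2)(2(T+1)M)^{2-α} + (1/(2N²)) Σ_{i≠j} |v_i - v_j|² |x_i - x_j|^{-α}`. -/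
theorem stmt16 (d N : ℕ) (hd : 1 ≤ d) (α T M : ℝ) (hα₀ : 0 < α) (hα₂ : α ≤ 2)
    (hT : 0 < T) (hM : 0 < M)
    (x v : ℝ → Fin N → EuclideanSpace ℝ (Fin d))
    (hx : ContDiffOn ℝ 1 x (Icc 0 T)) (hv : ContDiffOn ℝ 1 v (Icc 0 T))
    (hODE : ∀ t ∈ Icc (0:ℝ) T, ∀ i : Fin N,
      HasDerivWithinAt (fun s => x s i) (v t i) (Icc 0 T) t ∧
      HasDerivWithinAt (fun s => v s i)
        ((N : ℝ)⁻¹ • ∑ j ∈ Finset.univ.erase i,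
          ‖x t i - x t j‖ ^ (-α) • (v t j - v t i)) (Icc 0 T) t)
    (hnc : ∀ t ∈ Icc (0:ℝ) T, ∀ i j : Fin N, i ≠ j → x t i ≠ x t j)
    (hvb : ∀ t ∈ Icc (0:ℝ) T, ∀ i : Fin N, ‖v t i‖ ≤ M)
    (hxb : ∀ t ∈ Icc (0:ℝ) T, ∀ i : Fin N, ‖x t i‖ ≤ (T + 1) * M)
    (φ : Phase d → ℝ) (hφ : ContDiff ℝ 2 φ)
    (hφbd : ∀ z : Phase d, |φ z| ≤ 1)
    (hφ' : ∀ z : Phase d, ‖fderiv ℝ φ z‖ ≤ 1)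
    (hφLip : LipschitzWith 1 (gradV φ)) :
    ∀ t ∈ Icc (0:ℝ) T, ∀ D : ℝ,
      HasDerivWithinAt (fun s => (N : ℝ)⁻¹ * ∑ i : Fin N, φ (x s i, v s i)) D (Icc 0 T) t →
      |D| ≤ M + (1/2) * (2 * (T + 1) * M) ^ (2 - α)
            + (1 / (2 * (N : ℝ)^2)) *
              ∑ i : Fin N, ∑ j ∈ Finset.univ.erase i,
                ‖v t i - v t j‖^2 * ‖x t i - x t j‖ ^ (-α) := by
  intro t ht D hD
  have hdiff : Differentiable ℝ φ := hφ.differentiable two_ne_zero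
  -- abbreviations
  set g : Fin N → EuclideanSpace ℝ (Fin d) := fun i => gradV φ (x t i, v t i) with hg
  set a : Fin N → EuclideanSpace ℝ (Fin d) := fun i =>
    (N : ℝ)⁻¹ • ∑ j ∈ Finset.univ.erase i, ‖x t i - x t j‖ ^ (-α) • (v t j - v t i) with ha
  -- identify the derivative
  have hD0 : HasDerivWithinAt (fun s => (N : ℝ)⁻¹ * ∑ i : Fin N, φ (x s i, v s i))
      ((N : ℝ)⁻¹ * ∑ i : Fin N, (fderiv ℝ φ (x t i, v t i)) (v t i, a i)) (Icc 0 T) t := by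
    refine HasDerivWithinAt.const_mul _ (HasDerivWithinAt.fun_sum fun i _ => ?_)
    have h1 : HasDerivWithinAt (fun s => (x s i, v s i)) (v t i, a i) (Icc 0 T) t :=
      ((hODE t ht i).1).prodMk ((hODE t ht i).2)
    exact ((hdiff (x t i, v t i)).hasFDerivAt).comp_hasDerivWithinAt t h1
  have hUD : UniqueDiffWithinAt ℝ (Icc (0:ℝ) T) t := uniqueDiffOn_Icc hT t ht
  have hDeq : D = (N : ℝ)⁻¹ * ∑ i : Fin N, (fderiv ℝ φ (x t i, v t i)) (v t i, a i) := by
    rw [← hD.derivWithin hUD, hD0.derivWithin hUD]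
  -- split each term
  have hterm : ∀ i : Fin N, (fderiv ℝ φ (x t i, v t i)) (v t i, a i)
      = (fderiv ℝ φ (x t i, v t i)) (v t i, 0)
        + (N:ℝ)⁻¹ * ∑ j ∈ Finset.univ.erase i,
            ‖x t i - x t j‖ ^ (-α) * (inner ℝ (g i) (v t j - v t i) : ℝ) := by
    intro i
    have hsplit : ((v t i, a i) : Phase d) = (v t i, 0) + (0, a i) := by
      simp [Prod.ext_iff]
    rw [hsplit, map_add]
    congr 1
    rw [← gradV_inner φ hdiff (x t i, v t i) (a i)]
    show (inner ℝ (g i) (a i) : ℝ) = _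
    rw [ha]
    simp only [real_inner_smul_right, inner_sum]
  -- the symmetrized interaction sum
  set S : ℝ := ∑ i : Fin N, ∑ j ∈ Finset.univ.erase i,
      ‖x t i - x t j‖ ^ (-α) * (inner ℝ (g i) (v t j - v t i) : ℝ) with hS
  have hDeq2 : D = (N : ℝ)⁻¹ * (∑ i : Fin N, (fderiv ℝ φ (x t i, v t i)) (v t i, 0))
      + (N:ℝ)⁻¹ * ((N:ℝ)⁻¹ * S) := by
    rw [hDeq]
    simp only [hterm]
    rw [Finset.sum_add_distrib, mul_add, ← Finset.mul_sum]
  -- bound the first part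
  have hNn : (0:ℝ) ≤ (N:ℝ)⁻¹ := by positivity
  have hfirst : |(N : ℝ)⁻¹ * (∑ i : Fin N, (fderiv ℝ φ (x t i, v t i)) (v t i, 0))| ≤ M := by
    rw [abs_mul, abs_of_nonneg hNn]
    have h1 : |∑ i : Fin N, (fderiv ℝ φ (x t i, v t i)) (v t i, 0)| ≤ (N:ℝ) * M := by
      calc |∑ i : Fin N, (fderiv ℝ φ (x t i, v t i)) (v t i, 0)|
          ≤ ∑ i : Fin N, |(fderiv ℝ φ (x t i, v t i)) (v t i, 0)| :=
            Finset.abs_sum_le_sum_abs _ _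
        _ ≤ ∑ _i : Fin N, M := by
            refine Finset.sum_le_sum fun i _ => ?_
            have h2 := (fderiv ℝ φ (x t i, v t i)).le_opNorm (v t i, (0:EuclideanSpace ℝ (Fin d)))
            have h3 : ‖((v t i, 0) : Phase d)‖ = ‖v t i‖ := by
              rw [Prod.norm_def]
              simp [le_max_iff]
            rw [h3] at h2
            calc |(fderiv ℝ φ (x t i, v t i)) (v t i, 0)|
                ≤ ‖fderiv ℝ φ (x t i, v t i)‖ * ‖v t i‖ := h2
              _ ≤ 1 * M := by
                  apply mul_le_mul (hφ' _) (hvb t ht i) (norm_nonneg _) zero_le_one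
              _ = M := one_mul M
        _ = (N:ℝ) * M := by simp [Finset.sum_const, mul_comm]
    calc (N:ℝ)⁻¹ * |∑ i : Fin N, (fderiv ℝ φ (x t i, v t i)) (v t i, 0)|
        ≤ (N:ℝ)⁻¹ * ((N:ℝ) * M) := by
          exact mul_le_mul_of_nonneg_left h1 hNn
      _ ≤ M := by
          rcases Nat.eq_zero_or_pos N with h | h
          · simp [h, hM.le]
          · have : (0:ℝ) < N := by exact_mod_cast h
            rw [← mul_assoc, inv_mul_cancel₀ this.ne', one_mul]
  -- constants
  set C : ℝ := 2 * (T + 1) * M with hC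
  have hCpos : (0:ℝ) < C := by rw [hC]; positivity
  have hCγ : (0:ℝ) ≤ C ^ (2-α) := Real.rpow_nonneg hCpos.le _
  set Q : ℝ := ∑ i : Fin N, ∑ j ∈ Finset.univ.erase i,
      ‖v t i - v t j‖^2 * ‖x t i - x t j‖ ^ (-α) with hQdef
  have hQ : (0:ℝ) ≤ Q := Finset.sum_nonneg fun i _ => Finset.sum_nonneg fun j _ =>
      mul_nonneg (sq_nonneg _) (Real.rpow_nonneg (norm_nonneg _) _)
  -- symmetrization
  have h2S : 2 * S = ∑ i : Fin N, ∑ j ∈ Finset.univ.erase i,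
      ‖x t i - x t j‖ ^ (-α) * (inner ℝ (g i - g j) (v t j - v t i) : ℝ) := by
    have hswap := sum_erase_swap
      (fun i j => ‖x t i - x t j‖ ^ (-α) * (inner ℝ (g i) (v t j - v t i) : ℝ))
    rw [two_mul]
    nth_rewrite 2 [hS]
    rw [hswap]
    nth_rewrite 1 [hS]
    rw [← Finset.sum_add_distrib]
    refine Finset.sum_congr rfl fun i _ => ?_
    rw [← Finset.sum_add_distrib]
    refine Finset.sum_congr rfl fun j _ => ?_
    rw [norm_sub_rev (x t j) (x t i), inner_sub_left]
    have hni : (inner ℝ (g j) (v t i - v t j) : ℝ) = - (inner ℝ (g j) (v t j - v t i) : ℝ) := by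
      rw [show v t i - v t j = -(v t j - v t i) by abel, inner_neg_right]
    rw [hni]
    ring
  -- bound on |2S|
  have habs : |2 * S| ≤ (N:ℝ) * ((N:ℝ) * ((1/2) * C ^ (2-α))) + Q := by
    rw [h2S]
    have hb : ∀ i : Fin N, ∀ j ∈ Finset.univ.erase i,
        |‖x t i - x t j‖ ^ (-α) * (inner ℝ (g i - g j) (v t j - v t i) : ℝ)|
          ≤ (1/2) * C ^ (2-α) + ‖v t i - v t j‖^2 * ‖x t i - x t j‖ ^ (-α) := by
      intro i j hj
      have hij : i ≠ j := (Finset.ne_of_mem_erase hj).symm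
      have hax : (0:ℝ) < ‖x t i - x t j‖ := by
        rw [norm_pos_iff, sub_ne_zero]; exact hnc t ht i j hij
      have hψnn : (0:ℝ) ≤ ‖x t i - x t j‖ ^ (-α) := Real.rpow_nonneg hax.le _
      have haC : ‖x t i - x t j‖ ≤ C := by
        calc ‖x t i - x t j‖ ≤ ‖x t i‖ + ‖x t j‖ := norm_sub_le _ _
          _ ≤ (T+1)*M + (T+1)*M := add_le_add (hxb t ht i) (hxb t ht j)
          _ = C := by rw [hC]; ring
      have hinner : |(inner ℝ (g i - g j) (v t j - v t i) : ℝ)|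
          ≤ max ‖x t i - x t j‖ ‖v t i - v t j‖ * ‖v t i - v t j‖ := by
        calc |(inner ℝ (g i - g j) (v t j - v t i) : ℝ)|
            ≤ ‖g i - g j‖ * ‖v t j - v t i‖ := abs_real_inner_le_norm _ _
          _ ≤ max ‖x t i - x t j‖ ‖v t i - v t j‖ * ‖v t i - v t j‖ := by
              rw [norm_sub_rev (v t j)]
              refine mul_le_mul_of_nonneg_right ?_ (norm_nonneg _)
              have hL := hφLip.dist_le_mul ((x t i, v t i) : Phase d) ((x t j, v t j) : Phase d)
              rw [NNReal.coe_one, one_mul] at hL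
              calc ‖g i - g j‖ = dist (g i) (g j) := (dist_eq_norm _ _).symm
                _ ≤ dist ((x t i, v t i) : Phase d) ((x t j, v t j) : Phase d) := hL
                _ = max ‖x t i - x t j‖ ‖v t i - v t j‖ := by
                    rw [Prod.dist_eq]
                    simp [dist_eq_norm]
      calc |‖x t i - x t j‖ ^ (-α) * (inner ℝ (g i - g j) (v t j - v t i) : ℝ)|
          = ‖x t i - x t j‖ ^ (-α) * |(inner ℝ (g i - g j) (v t j - v t i) : ℝ)| := by
            rw [abs_mul, abs_of_nonneg hψnn]
        _ ≤ ‖x t i - x t j‖ ^ (-α)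
              * (max ‖x t i - x t j‖ ‖v t i - v t j‖ * ‖v t i - v t j‖) :=
            mul_le_mul_of_nonneg_left hinner hψnn
        _ ≤ (1/2) * C ^ (2-α) + ‖x t i - x t j‖ ^ (-α) * ‖v t i - v t j‖^2 :=
            pair_bound α hα₂ _ _ C hax haC
        _ = (1/2) * C ^ (2-α) + ‖v t i - v t j‖^2 * ‖x t i - x t j‖ ^ (-α) := by ring
    calc |∑ i : Fin N, ∑ j ∈ Finset.univ.erase i,
          ‖x t i - x t j‖ ^ (-α) * (inner ℝ (g i - g j) (v t j - v t i) : ℝ)|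
        ≤ ∑ i : Fin N, ∑ j ∈ Finset.univ.erase i,
            |‖x t i - x t j‖ ^ (-α) * (inner ℝ (g i - g j) (v t j - v t i) : ℝ)| := by
          refine le_trans (Finset.abs_sum_le_sum_abs _ _) ?_
          exact Finset.sum_le_sum fun i _ => Finset.abs_sum_le_sum_abs _ _
      _ ≤ ∑ i : Fin N, ∑ j ∈ Finset.univ.erase i,
            ((1/2) * C ^ (2-α) + ‖v t i - v t j‖^2 * ‖x t i - x t j‖ ^ (-α)) :=
          Finset.sum_le_sum fun i _ => Finset.sum_le_sum (hb i)
      _ = (∑ i : Fin N, ∑ _j ∈ Finset.univ.erase i, ((1/2) * C ^ (2-α))) + Q := by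
          rw [hQdef, ← Finset.sum_add_distrib]
          exact Finset.sum_congr rfl fun i _ => Finset.sum_add_distrib
      _ ≤ (N:ℝ) * ((N:ℝ) * ((1/2) * C ^ (2-α))) + Q := by
          refine add_le_add_left ?_ Q
          have hrow : ∀ i : Fin N, ∑ _j ∈ Finset.univ.erase i, ((1/2) * C ^ (2-α))
              ≤ (N:ℝ) * ((1/2) * C ^ (2-α)) := by
            intro i
            rw [Finset.sum_const, nsmul_eq_mul]
            refine mul_le_mul_of_nonneg_right ?_ (by positivity)
            have h1 : (Finset.univ.erase i).card ≤ N := by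
              refine le_trans (Finset.card_erase_le) ?_
              simp
            exact_mod_cast h1
          calc (∑ i : Fin N, ∑ _j ∈ Finset.univ.erase i, ((1/2) * C ^ (2-α)))
              ≤ ∑ _i : Fin N, (N:ℝ) * ((1/2) * C ^ (2-α)) :=
                Finset.sum_le_sum fun i _ => hrow i
            _ = (N:ℝ) * ((N:ℝ) * ((1/2) * C ^ (2-α))) := by
                rw [Finset.sum_const, nsmul_eq_mul]
                simp
  -- finish
  have hSabs : |S| ≤ (1/2) * ((N:ℝ) * ((N:ℝ) * ((1/2) * C ^ (2-α))) + Q) := by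
    have : |2 * S| = 2 * |S| := by rw [abs_mul]; norm_num
    linarith [habs, this.symm.le]
  have hmain : |D| ≤ M + (N:ℝ)⁻¹ * ((N:ℝ)⁻¹ * |S|) := by
    rw [hDeq2]
    refine le_trans (abs_add_le _ _) ?_
    refine add_le_add hfirst ?_
    rw [abs_mul, abs_mul, abs_of_nonneg hNn]
  have ht1 : (N:ℝ)⁻¹ * (N:ℝ) ≤ 1 := by
    rcases Nat.eq_zero_or_pos N with h | h
    · simp [h]
    · have : (0:ℝ) < N := by exact_mod_cast h
      rw [inv_mul_cancel₀ this.ne']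
  have hfin : (N:ℝ)⁻¹ * ((N:ℝ)⁻¹ * ((1/2) * ((N:ℝ) * ((N:ℝ) * ((1/2) * C ^ (2-α))) + Q)))
      ≤ (1/2) * C ^ (2-α) + (1 / (2 * (N : ℝ)^2)) * Q :=
    final_arith (N:ℝ) (C ^ (2-α)) Q ht1 (by positivity) hCγ hQ
  have hstep : (N:ℝ)⁻¹ * ((N:ℝ)⁻¹ * |S|)
      ≤ (N:ℝ)⁻¹ * ((N:ℝ)⁻¹ * ((1/2) * ((N:ℝ) * ((N:ℝ) * ((1/2) * C ^ (2-α))) + Q))) := by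
    exact mul_le_mul_of_nonneg_left (mul_le_mul_of_nonneg_left hSabs hNn) hNn
  calc |D| ≤ M + (N:ℝ)⁻¹ * ((N:ℝ)⁻¹ * |S|) := hmain
    _ ≤ M + ((1/2) * C ^ (2-α) + (1 / (2 * (N : ℝ)^2)) * Q) := by
        refine add_le_add_right (le_trans hstep hfin) M
    _ = M + (1/2) * (2 * (T + 1) * M) ^ (2 - α) + (1 / (2 * (N : ℝ)^2)) * Q := by
        rw [hC]; ring

end
end
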